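/- arXiv:1705.00758 — 2 statements merged into one kernel-verified Lean document; each statement's English description precedes it below -/
import Mathlib

section
/- Let ι ∈ I be a minuscule node with fundamental weight ϖ_ι and let γ be the distinguished root (γ = α_ι in the simply-laced case; γ = α_{n-1} + 2α_n in type B_n with ι = n; γ = θ the highest root in type C_n with ι = 1). Then ⟨ϖ_ι, γ^∨⟩ = 1, and ⟨α, γ^∨⟩ = −1 for every α ∈ R_P^+ \ R_Q^+, where I_P = I \ {ι} and I_Q = { j ∈ I_P : ⟨α_j, γ^∨⟩ = 0 }. -/
/- A combinatorial framework for reduced crystallographic root systems with a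
chosen system of simple roots, realized inside a real inner product space.
Weyl group elements are represented as plain functions `V → V` that are
compositions of simple reflections; `len` is the Coxeter length. -/

noncomputable section
open Classical
open scoped RealInnerProductSpace

namespace Pp

variable {V : Type*} [NormedAddCommGroup V] [InnerProductSpace ℝ V]

/-- The coroot pairing `⟨x, α^∨⟩ = 2⟨x,α⟩/⟨α,α⟩`. -/
def cpr (x α : V) : ℝ := 2 * ⟪x, α⟫ / ⟪α, α⟫

/-- The reflection `s_α`, as a plain function. -/
def sref (α : V) : V → V := fun x => x - cpr x α • α

/-- `w` is a product of `n` reflections in simple roots taken from `Δ`. -/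
def IsWord (Δ : Finset V) (w : V → V) (n : ℕ) : Prop :=
  ∃ l : List V, l.length = n ∧ (∀ α ∈ l, α ∈ Δ) ∧ w = (l.map sref).foldr (· ∘ ·) id

/-- The Weyl group generated by the simple reflections, as a set of functions. -/
def Weyl (Δ : Finset V) : Set (V → V) := { w | ∃ n, IsWord Δ w n }

/-- Coxeter length with respect to the simple system `Δ`. -/
def len (Δ : Finset V) (w : V → V) : ℕ := sInf { n | IsWord Δ w n }

/-- The positive roots: roots which are nonnegative combinations of the
simple roots in `Δ`.  For a sub-system `Δ' ⊆ Δ`, `Pos Φ Δ'` is the set of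
positive roots supported on `Δ'`. -/
def Pos (Φ Δ : Finset V) : Finset V :=
  Φ.filter fun β => ∃ c : V → ℝ, (∀ α ∈ Δ, 0 ≤ c α) ∧ β = ∑ α ∈ Δ, c α • α

/-- Half sum of positive roots. -/
def rho (Φ Δ : Finset V) : V := (2:ℝ)⁻¹ • ∑ β ∈ Pos Φ Δ, β

/-- The axioms of a reduced crystallographic root system `Φ` with simple
system `Δ`. -/
structure IsRS (Φ Δ : Finset V) : Prop where
  zero_not_mem : (0:V) ∉ Φ
  neg_mem : ∀ α ∈ Φ, -α ∈ Φ
  reduced : ∀ α ∈ Φ, ∀ t : ℝ, t • α ∈ (Φ : Set V) → t = 1 ∨ t = -1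
  cryst : ∀ α ∈ Φ, ∀ β ∈ Φ, ∃ k : ℤ, (k : ℝ) = cpr α β
  refl_mem : ∀ α ∈ Φ, ∀ β ∈ Φ, sref α β ∈ Φ
  simple_mem : ∀ α ∈ Δ, α ∈ Φ
  simple_indep : LinearIndependent ℝ (fun α : Δ => (α : V))
  pos_or_neg : ∀ β ∈ Φ, β ∈ Pos Φ Δ ∨ -β ∈ Pos Φ Δ

/-- `β` is a quantum root: `ℓ(s_β) = ⟨2ρ, β^∨⟩ - 1`. -/
def IsQuantum (Φ Δ : Finset V) (β : V) : Prop :=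
  (len Δ (sref β) : ℝ) = cpr ((2:ℝ) • rho Φ Δ) β - 1

/-- Minimal length coset representatives `W^P`: elements of `W` mapping the
positive roots of the parabolic (`Pos Φ ΔP`) to positive roots. -/
def MinRep (Φ Δ ΔP : Finset V) (w : V → V) : Prop :=
  w ∈ Weyl Δ ∧ ∀ β ∈ Pos Φ ΔP, w β ∈ Pos Φ Δ

/-- `θ` is the highest root. -/
def IsHighest (Φ Δ : Finset V) (θ : V) : Prop :=
  θ ∈ Pos Φ Δ ∧ ∀ β ∈ Φ, ∃ c : V → ℝ, (∀ α ∈ Δ, 0 ≤ c α) ∧ θ - β = ∑ α ∈ Δ, c α • α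

/-- All roots have the same length. -/
def SimplyLaced (Φ : Finset V) : Prop := ∀ α ∈ Φ, ∀ β ∈ Φ, ⟪α, α⟫ = ⟪β, β⟫

/-- The node `ι ∈ Δ` is minuscule: the coefficient of `α_ι^∨` in every coroot
is at most `1`. -/
def Minuscule (Φ Δ : Finset V) (ι : V) : Prop :=
  ∀ β ∈ Φ, ∀ c : V → ℝ,
    (2 / ⟪β, β⟫) • β = ∑ α ∈ Δ, c α • ((2 / ⟪α, α⟫) • α) → c ι ≤ 1

/-- The node `ι ∈ Δ` is cominuscule: the coefficient of `α_ι` in every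
positive root is at most `1`. -/
def Cominuscule (Φ Δ : Finset V) (ι : V) : Prop :=
  ∀ β ∈ Pos Φ Δ, ∀ c : V → ℝ,
    ((∀ α ∈ Δ, 0 ≤ c α) ∧ β = ∑ α ∈ Δ, c α • α) → c ι ≤ 1

/-- `(Φ, Δ)` is the root system of type `B_n` in the standard coordinates
given by the orthonormal family `e`. -/
def TypeBData (Φ Δ : Finset V) (n : ℕ) (e : Fin n → V) : Prop :=
  Orthonormal ℝ e ∧
  (Φ : Set V) =
    ({v | ∃ i j : Fin n, i ≠ j ∧ (v = e i - e j ∨ v = e i + e j ∨ v = -(e i + e j))} ∪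
     {v | ∃ i : Fin n, v = e i ∨ v = -(e i)}) ∧
  (Δ : Set V) =
    ({v | ∃ i : Fin n, ∃ h : (i : ℕ) + 1 < n, v = e i - e ⟨(i : ℕ) + 1, h⟩} ∪
     {v | ∃ h : 0 < n, v = e ⟨n - 1, by omega⟩})

/-- `(Φ, Δ)` is the root system of type `C_n` in the standard coordinates
given by the orthonormal family `e`. -/
def TypeCData (Φ Δ : Finset V) (n : ℕ) (e : Fin n → V) : Prop :=
  Orthonormal ℝ e ∧
  (Φ : Set V) =
    ({v | ∃ i j : Fin n, i ≠ j ∧ (v = e i - e j ∨ v = e i + e j ∨ v = -(e i + e j))} ∪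
     {v | ∃ i : Fin n, v = (2:ℝ) • e i ∨ v = -((2:ℝ) • e i)}) ∧
  (Δ : Set V) =
    ({v | ∃ i : Fin n, ∃ h : (i : ℕ) + 1 < n, v = e i - e ⟨(i : ℕ) + 1, h⟩} ∪
     {v | ∃ h : 0 < n, v = (2:ℝ) • e ⟨n - 1, by omega⟩})

/-- `γ` is the distinguished (quantum) root attached to the minuscule node
`ι`: `γ = α_ι` in the simply-laced case, `γ = α_{n-1} + 2α_n = e_{n-1} + e_n`
in type `B_n` (with `ι = n`), and `γ = θ = 2e_1` in type `C_n` (with `ι = 1`). -/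
def DistinguishedGamma (Φ Δ : Finset V) (ι γ : V) : Prop :=
  (SimplyLaced Φ ∧ γ = ι) ∨
  (∃ n : ℕ, ∃ _h : 2 ≤ n, ∃ e : Fin n → V, TypeBData Φ Δ n e ∧
    ι = e ⟨n - 1, by omega⟩ ∧ γ = e ⟨n - 2, by omega⟩ + e ⟨n - 1, by omega⟩) ∨
  (∃ n : ℕ, ∃ _h : 2 ≤ n, ∃ e : Fin n → V, TypeCData Φ Δ n e ∧
    ι = e ⟨0, by omega⟩ - e ⟨1, by omega⟩ ∧ γ = (2:ℝ) • e ⟨0, by omega⟩)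

end Pp

namespace Pp
variable {V : Type*} [NormedAddCommGroup V] [InnerProductSpace ℝ V]

lemma cs_eq {x y : V} (hy : ⟪y,y⟫ ≠ 0) (h : ⟪x,y⟫*⟪x,y⟫ = ⟪x,x⟫*⟪y,y⟫) :
    x = (⟪x,y⟫/⟪y,y⟫) • y := by
  have hv : ⟪x - (⟪x,y⟫/⟪y,y⟫) • y, x - (⟪x,y⟫/⟪y,y⟫) • y⟫ = 0 := by
    simp only [inner_sub_left, inner_sub_right, real_inner_smul_left, real_inner_smul_right,
      real_inner_comm x y]
    field_simp
    ring_nf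
    nlinarith [h]
  exact sub_eq_zero.mp (inner_self_eq_zero.mp hv)

lemma cpr_sum (c : V → ℝ) (S : Finset V) (γ : V) :
    cpr (∑ j ∈ S, c j • j) γ = ∑ j ∈ S, c j * cpr j γ := by
  simp only [cpr, sum_inner, real_inner_smul_left, Finset.mul_sum, Finset.sum_div]
  refine Finset.sum_congr rfl fun j _ => by ring

lemma coeff_unique {Φ Δ : Finset V} (hRS : IsRS Φ Δ) (c d : V → ℝ)
    (h : ∑ j ∈ Δ, c j • j = ∑ j ∈ Δ, d j • j) : ∀ j ∈ Δ, c j = d j := by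
  intro j hj
  have h0 : ∑ a : Δ, (c a - d a) • (a : V) = 0 := by
    have ha := Finset.sum_attach Δ (fun j => (c j - d j) • j)
    have : (∑ a : Δ, (c a - d a) • (a : V)) = ∑ a ∈ Δ.attach, (c a.1 - d a.1) • (a.1 : V) := rfl
    rw [this, ha]
    simp [sub_smul, Finset.sum_sub_distrib, h]
  have := Fintype.linearIndependent_iff.mp hRS.simple_indep (fun a => c a - d a) h0 ⟨j, hj⟩
  linarith [this]

/-- Nonnegativity of coefficients of a positive root, for any expansion. -/
lemma pos_coeff {Φ Δ : Finset V} (hRS : IsRS Φ Δ) {β : V} (hβ : β ∈ Pos Φ Δ)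
    (d : V → ℝ) (hd : β = ∑ j ∈ Δ, d j • j) : ∀ j ∈ Δ, 0 ≤ d j := by
  obtain ⟨-, c, hc, hsum⟩ := Finset.mem_filter.mp hβ
  intro j hj
  have := coeff_unique hRS c d (hsum ▸ hd ▸ rfl)
  exact (this j hj) ▸ hc j hj

lemma root_ne_zero {Φ Δ : Finset V} (hRS : IsRS Φ Δ) {α : V} (hα : α ∈ Φ) : α ≠ 0 :=
  fun h => hRS.zero_not_mem (h ▸ hα)

lemma inner_self_pos' {Φ Δ : Finset V} (hRS : IsRS Φ Δ) {α : V} (hα : α ∈ Φ) :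
    0 < ⟪α,α⟫ := by
  rcases lt_or_eq_of_le (real_inner_self_nonneg (x := α)) with h | h
  · exact h
  · exact absurd (inner_self_eq_zero.mp h.symm) (root_ne_zero hRS hα)

lemma sub_mem {Φ Δ : Finset V} (hRS : IsRS Φ Δ) {α β : V} (hα : α ∈ Φ) (hβ : β ∈ Φ)
    (hpos : 0 < ⟪α, β⟫) : α = β ∨ α - β ∈ Φ := by
  have hαα := inner_self_pos' hRS hα
  have hββ := inner_self_pos' hRS hβ
  obtain ⟨k, hk⟩ := hRS.cryst α hα β hβ
  obtain ⟨m, hm⟩ := hRS.cryst β hβ α hα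
  have hba : ⟪β,α⟫ = ⟪α,β⟫ := real_inner_comm α β
  have hk0 : 0 < (k:ℝ) := by
    rw [hk]; unfold cpr; exact div_pos (by linarith) hββ
  have hm0 : 0 < (m:ℝ) := by
    rw [hm]; unfold cpr; rw [hba]; exact div_pos (by linarith) hαα
  have hk1 : 1 ≤ k := by exact_mod_cast hk0
  have hm1 : 1 ≤ m := by exact_mod_cast hm0
  by_cases hks : k = 1
  · right
    have := hRS.refl_mem β hβ α hα
    have hs : sref β α = α - β := by
      unfold sref; rw [← hk, hks]; push_cast; rw [one_smul]
    rwa [hs] at this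
  by_cases hms : m = 1
  · right
    have := hRS.refl_mem α hα β hβ
    have hs : sref α β = β - α := by
      unfold sref; rw [← hm, hms]; push_cast; rw [one_smul]
    rw [hs] at this
    have := hRS.neg_mem _ this
    rwa [neg_sub] at this
  -- both ≥ 2
  have hcs := real_inner_mul_inner_self_le α β
  have hprod : (k:ℝ) * m = 4 * (⟪α,β⟫ * ⟪α,β⟫) / (⟪α,α⟫ * ⟪β,β⟫) := by
    rw [hk, hm]; unfold cpr; rw [hba]; field_simp; ring
  have hle4 : (k:ℝ) * m ≤ 4 := by
    rw [hprod]
    rw [div_le_iff₀ (by positivity)]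
    nlinarith
  have hk2 : 2 ≤ k := by omega
  have hm2 : 2 ≤ m := by omega
  have hkm4 : (k:ℝ) * m = 4 := by
    have : (4:ℝ) ≤ (k:ℝ)*m := by
      have : (2:ℝ) ≤ k := by exact_mod_cast hk2
      have : (2:ℝ) ≤ m := by exact_mod_cast hm2
      nlinarith
    linarith
  -- equality in CS ⇒ proportional
  have heq : ⟪α,β⟫*⟪α,β⟫ = ⟪α,α⟫*⟪β,β⟫ := by
    rw [hprod] at hkm4
    field_simp at hkm4
    nlinarith [hkm4]
  have hx := cs_eq (x := α) (y := β) (ne_of_gt hββ) heq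
  rcases hRS.reduced β hβ (⟪α,β⟫/⟪β,β⟫) (by rw [← hx]; exact hα) with ht | ht
  · left; rw [hx, ht, one_smul]
  · exfalso
    have : ⟪α,β⟫ = -⟪β,β⟫ := by
      have := ht
      field_simp at this
      linarith [this]
    nlinarith

/-- If the pairing with γ vanishes and each simple pairing is ≤ 0,
the root is supported on the zero-pairing simples. -/
lemma mem_posQ {Φ ΔP : Finset V} (γ : V) {α : V} (hα : α ∈ Pos Φ ΔP)
    (hle : ∀ j ∈ ΔP, cpr j γ ≤ 0) (h0 : cpr α γ = 0) :
    α ∈ Pos Φ (ΔP.filter fun j => cpr j γ = 0) := by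
  obtain ⟨hαΦ, c, hc, hsum⟩ := Finset.mem_filter.mp hα
  have hterm : ∀ j ∈ ΔP, c j * cpr j γ ≤ 0 := fun j hj =>
    mul_nonpos_of_nonneg_of_nonpos (hc j hj) (hle j hj)
  have hsum0 : ∑ j ∈ ΔP, c j * cpr j γ = 0 := by
    rw [← cpr_sum, ← hsum, h0]
  have hzero : ∀ j ∈ ΔP, c j * cpr j γ = 0 :=
    (Finset.sum_eq_zero_iff_of_nonpos hterm).mp hsum0
  refine Finset.mem_filter.mpr ⟨hαΦ, c, fun j hj => hc j (Finset.mem_filter.mp hj).1, ?_⟩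
  rw [hsum, ← Finset.sum_filter_add_sum_filter_not ΔP (fun j => cpr j γ = 0) (fun j => c j • j)]
  have : ∑ j ∈ ΔP.filter (fun j => ¬ cpr j γ = 0), c j • j = 0 := by
    refine Finset.sum_eq_zero fun j hj => ?_
    obtain ⟨hjP, hjne⟩ := Finset.mem_filter.mp hj
    have : c j = 0 := by
      have := hzero j hjP
      rcases mul_eq_zero.mp this with h | h
      · exact h
      · exact absurd h hjne
    rw [this, zero_smul]
  rw [this, add_zero]

/-- Distinct simple roots pair nonpositively. -/
lemma simple_inner_nonpos {Φ Δ : Finset V} (hRS : IsRS Φ Δ) {j ι : V}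
    (hj : j ∈ Δ) (hι : ι ∈ Δ) (hne : j ≠ ι) : ⟪j, ι⟫ ≤ 0 := by
  by_contra hpos
  push_neg at hpos
  have hjΦ := hRS.simple_mem j hj
  have hιΦ := hRS.simple_mem ι hι
  have key : ∀ a ∈ Δ, ∀ b ∈ Δ, a ≠ b →
      a - b = ∑ x ∈ Δ, ((if x = a then (1:ℝ) else 0) + (if x = b then -1 else 0)) • x := by
    intro a ha b hb _
    simp only [add_smul, Finset.sum_add_distrib, ite_smul, one_smul, neg_smul, zero_smul]
    rw [Finset.sum_ite_eq' Δ a, Finset.sum_ite_eq' Δ b]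
    simp [ha, hb, sub_eq_add_neg]
  rcases sub_mem hRS hjΦ hιΦ hpos with h | h
  · exact hne h
  rcases hRS.pos_or_neg _ h with hp | hp
  · have := pos_coeff hRS hp _ (key j hj ι hι hne) ι hι
    simp [hne, Ne.symm hne] at this
    linarith
  · have hp' : ι - j ∈ Pos Φ Δ := by rwa [neg_sub] at hp
    have := pos_coeff hRS hp' _ (key ι hι j hj (Ne.symm hne)) j hj
    simp [hne, Ne.symm hne] at this
    linarith

/-- Extend a `Pos Φ (Δ.erase ι)` expansion to one over `Δ` with zero `ι`-coefficient. -/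
lemma pos_erase_extend {Φ Δ : Finset V} {ι α : V} (hι : ι ∈ Δ)
    (hα : α ∈ Pos Φ (Δ.erase ι)) :
    ∃ c : V → ℝ, (∀ x ∈ Δ, 0 ≤ c x) ∧ c ι = 0 ∧ α = ∑ x ∈ Δ, c x • x := by
  obtain ⟨hαΦ, c, hc, hsum⟩ := Finset.mem_filter.mp hα
  refine ⟨fun x => if x = ι then 0 else c x, ?_, by simp, ?_⟩
  · intro x hx
    by_cases hxι : x = ι
    · simp [hxι]
    · simpa [hxι] using hc x (Finset.mem_erase.mpr ⟨hxι, hx⟩)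
  · rw [hsum, ← Finset.add_sum_erase Δ (fun x => (if x = ι then (0:ℝ) else c x) • x) hι]
    have h0 : (if ι = ι then (0:ℝ) else c ι) • ι = 0 := by simp
    rw [h0, zero_add]
    refine Finset.sum_congr rfl fun x hx => ?_
    rw [if_neg (Finset.mem_erase.mp hx).1]



/-- core of the simply-laced case -/
lemma sl_case {Φ Δ : Finset V} (hRS : IsRS Φ Δ) {ι : V} (hι : ι ∈ Δ)
    (hSL : SimplyLaced Φ) :
    ∀ α ∈ Pos Φ (Δ.erase ι),
      α ∉ Pos Φ ((Δ.erase ι).filter fun j => cpr j ι = 0) →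
      cpr α ι = -1 := by
  intro α hα hαQ
  have hιΦ := hRS.simple_mem ι hι
  obtain ⟨hαΦ, c, hc, hsum⟩ := Finset.mem_filter.mp hα
  have hιι := inner_self_pos' hRS hιΦ
  have hle : ∀ j ∈ Δ.erase ι, cpr j ι ≤ 0 := by
    intro j hj
    obtain ⟨hne, hjΔ⟩ := Finset.mem_erase.mp hj
    have h1 := simple_inner_nonpos hRS hjΔ hι hne
    unfold cpr
    apply div_nonpos_of_nonpos_of_nonneg (by linarith) real_inner_self_nonneg
  have hk_le : cpr α ι ≤ 0 := by
    rw [hsum, cpr_sum]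
    exact Finset.sum_nonpos fun j hj =>
      mul_nonpos_of_nonneg_of_nonpos (hc j hj) (hle j hj)
  have hk_ne : cpr α ι ≠ 0 := fun h0 => hαQ (mem_posQ ι hα hle h0)
  obtain ⟨k, hk⟩ := hRS.cryst α hαΦ ι hιΦ
  have hkneg : k ≤ -1 := by
    have : (k:ℝ) < 0 := by rw [hk]; exact lt_of_le_of_ne hk_le hk_ne
    have h' : k < 0 := by exact_mod_cast this
    omega
  by_cases hk1 : k = -1
  · rw [← hk, hk1]; norm_num
  exfalso
  have hk2 : (k:ℝ) ≤ -2 := by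
    have : k ≤ -2 := by omega
    exact_mod_cast this
  have hcs := real_inner_mul_inner_self_le α ι
  have hlen := hSL α hαΦ ι hιΦ
  have hcprd : cpr α ι = 2 * ⟪α,ι⟫ / ⟪ι,ι⟫ := rfl
  have hineq : ⟪α,ι⟫ ≤ -⟪ι,ι⟫ := by
    have h2 : 2 * ⟪α,ι⟫ / ⟪ι,ι⟫ ≤ -2 := by rw [← hcprd, ← hk]; exact hk2
    rw [div_le_iff₀ hιι] at h2
    nlinarith
  have heq : ⟪α,ι⟫ * ⟪α,ι⟫ = ⟪α,α⟫ * ⟪ι,ι⟫ := by nlinarith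
  have hx := cs_eq (ne_of_gt hιι) heq
  have ht : ⟪α,ι⟫ / ⟪ι,ι⟫ = -1 := by
    rcases hRS.reduced ι hιΦ (⟪α,ι⟫ / ⟪ι,ι⟫)
        (by rw [← hx]; exact Finset.mem_coe.mpr hαΦ) with h | h
    · exfalso
      rw [div_eq_one_iff_eq (ne_of_gt hιι)] at h
      nlinarith
    · exact h
  have hαι : α = -ι := by rw [hx, ht, neg_one_smul]
  -- contradiction with support of α on Δ.erase ι
  obtain ⟨c', hc', hc'ι, hsum'⟩ := pos_erase_extend hι hα
  have hd : -ι = ∑ x ∈ Δ, (fun x => if x = ι then (-1:ℝ) else 0) x • x := by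
    simp only [ite_smul, neg_smul, one_smul, zero_smul]
    rw [Finset.sum_ite_eq' Δ ι fun x => -x]
    simp [hι]
  have := coeff_unique hRS c' (fun x => if x = ι then (-1:ℝ) else 0)
      (by rw [← hsum', hαι]; exact hd) ι hι
  rw [hc'ι] at this
  simp at this

end Pp

open Pp in
/-- Lemma 2.1: for the distinguished root `γ` of a minuscule node `ι`:
`⟨ϖ_ι, γ^∨⟩ = 1`, and `⟨α, γ^∨⟩ = -1` for all `α ∈ R_P^+ \ R_Q^+`, where
`I_P = I \ {ι}` and `I_Q = {j ∈ I_P : ⟨α_j, γ^∨⟩ = 0}`. -/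
theorem stmt4 {V : Type*} [NormedAddCommGroup V] [InnerProductSpace ℝ V]
    (Φ Δ : Finset V) (hRS : IsRS Φ Δ) (ι : V) (hι : ι ∈ Δ)
    (hmin : Minuscule Φ Δ ι)
    (γ : V) (hγ : DistinguishedGamma Φ Δ ι γ)
    (ϖ : V) (hϖ : ∀ α ∈ Δ, cpr ϖ α = if α = ι then 1 else 0) :
    cpr ϖ γ = 1 ∧
    ∀ α ∈ Pos Φ (Δ.erase ι),
      α ∉ Pos Φ ((Δ.erase ι).filter fun j => cpr j γ = 0) →
      cpr α γ = -1 := by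
  rcases hγ with ⟨hSL, hγι⟩ | hBC
  · subst hγι
    refine ⟨by rw [hϖ γ hι]; simp, sl_case hRS hι hSL⟩
  rcases hBC with hB | hC
  · -- type B_n, ι the last (short) node, γ = e_{n-2} + e_{n-1}
    obtain ⟨n, hn, e, ⟨hon, hΦ, hΔ⟩, hιe, hγe⟩ := hB
    have hee := orthonormal_iff_ite.mp hon
    have emk : ∀ (a b : ℕ) (ha : a < n) (hb : b < n), a = b → e ⟨a, ha⟩ = e ⟨b, hb⟩ :=
      fun a b ha hb h => by subst h; rfl
    have convert_if : ∀ (i : Fin n) (m : ℕ) (hm : m < n),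
        (if i = ⟨m, hm⟩ then (1:ℝ) else 0) = if (i:ℕ) = m then 1 else 0 := by
      intro i m hm
      by_cases h : (i:ℕ) = m
      · rw [if_pos (Fin.ext_iff.mpr h), if_pos h]
      · rw [if_neg (fun hh => h (Fin.ext_iff.mp hh)), if_neg h]
    have hγγ : ⟪γ, γ⟫ = 2 := by
      rw [hγe]
      simp only [inner_add_left, inner_add_right, hee, convert_if]
      rw [if_neg (show ¬ n-2 = n-1 by omega), if_neg (show ¬ n-1 = n-2 by omega)]
      norm_num
    have hP : ∀ x ∈ Δ.erase ι, ∃ k : ℕ, ∃ hk : k + 1 < n,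
        x = e ⟨k, by omega⟩ - e ⟨k+1, hk⟩ := by
      intro x hx
      obtain ⟨hne, hxΔ⟩ := Finset.mem_erase.mp hx
      have hx' : x ∈ (Δ : Set V) := hxΔ
      rw [hΔ] at hx'
      rcases hx' with ⟨i, h, rfl⟩ | ⟨h0, hx2⟩
      · exact ⟨(i:ℕ), h, rfl⟩
      · exact absurd (by rw [hx2, hιe]) hne
    constructor
    · -- ⟨ϖ, γ^∨⟩ = 1
      have hϖι := hϖ ι hι
      rw [if_pos rfl] at hϖι
      unfold cpr at hϖι
      have hιι : ⟪ι, ι⟫ = 1 := by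
        rw [hιe, hee, if_pos rfl]
      rw [hιι, hιe] at hϖι
      have hβΔ : e ⟨n-2, (by omega : n-2 < n)⟩ - e ⟨n-1, (by omega : n-1 < n)⟩ ∈ Δ := by
        rw [← Finset.mem_coe, hΔ]
        refine Or.inl ⟨⟨n-2, by omega⟩, (show n-2+1 < n by omega), ?_⟩
        exact congrArg₂ (fun a b => a - b) rfl
          (emk (n-1) (n-2+1) (by omega) (by omega) (by omega))
      have hβι : e ⟨n-2, (by omega : n-2 < n)⟩ - e ⟨n-1, (by omega : n-1 < n)⟩ ≠ ι := by
        intro h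
        rw [hιe] at h
        have h2 := congrArg (fun v => (inner ℝ v (e ⟨n-1, (by omega : n-1 < n)⟩) : ℝ)) h
        simp only [inner_sub_left, hee, Fin.mk.injEq] at h2
        split_ifs at h2 <;> first | omega | norm_num at h2
      have hϖβ := hϖ _ hβΔ
      rw [if_neg hβι] at hϖβ
      unfold cpr at hϖβ
      have hββ : ⟪e ⟨n-2, (by omega : n-2 < n)⟩ - e ⟨n-1, (by omega : n-1 < n)⟩,
          e ⟨n-2, (by omega : n-2 < n)⟩ - e ⟨n-1, (by omega : n-1 < n)⟩⟫ = 2 := by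
        simp only [inner_sub_left, inner_sub_right, hee, Fin.mk.injEq]
        rw [if_neg (show ¬ n-2 = n-1 by omega), if_neg (show ¬ n-1 = n-2 by omega)]
        norm_num
      rw [hββ, inner_sub_right] at hϖβ
      unfold cpr
      rw [hγγ, hγe, inner_add_right]
      field_simp at hϖβ ⊢
      linarith
    · -- the pairing with roots of R_P^+ \ R_Q^+
      intro α hα hαQ
      obtain ⟨hαΦ, c, hc, hsum⟩ := Finset.mem_filter.mp hα
      have hes : ∀ m : Fin n, ⟪e m, ∑ i : Fin n, e i⟫ = 1 := by
        intro m
        rw [inner_sum]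
        simp [hee]
      have hαs : ⟪α, ∑ i : Fin n, e i⟫ = 0 := by
        rw [hsum, sum_inner]
        refine Finset.sum_eq_zero fun x hx => ?_
        obtain ⟨k, hk, rfl⟩ := hP x hx
        rw [real_inner_smul_left, inner_sub_left, hes, hes]
        ring
      have hα' : α ∈ (Φ : Set V) := hαΦ
      rw [hΦ] at hα'
      rcases hα' with ⟨i, j, hij, hform | hform | hform⟩ | ⟨i, hform | hform⟩
      · -- α = e i - e j, the real case
        have hij' : (i:ℕ) ≠ (j:ℕ) := fun h => hij (Fin.ext_iff.mpr h)
        have hilt := i.isLt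
        have hjlt := j.isLt
        have hlt : (i:ℕ) < (j:ℕ) := by
          by_contra hge
          have heg : ∀ m : Fin n,
              ⟪e m, ∑ x ∈ Finset.univ.filter (fun m : Fin n => (m:ℕ) ≤ (j:ℕ)), e x⟫
              = if (m:ℕ) ≤ (j:ℕ) then 1 else 0 := by
            intro m
            rw [inner_sum]
            simp only [hee]
            rw [Finset.sum_ite_eq]
            simp [Finset.mem_filter]
          have h1 : (0:ℝ) ≤ ⟪α, ∑ x ∈ Finset.univ.filter (fun m : Fin n => (m:ℕ) ≤ (j:ℕ)), e x⟫ := by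
            rw [hsum, sum_inner]
            refine Finset.sum_nonneg fun x hx => ?_
            obtain ⟨k, hk, rfl⟩ := hP x hx
            have hcx := hc _ hx
            rw [real_inner_smul_left, inner_sub_left, heg, heg]
            split_ifs <;> first | (exfalso; omega) | (nlinarith [hcx]; done)
          rw [hform, inner_sub_left, heg, heg, if_neg (show ¬ (i:ℕ) ≤ (j:ℕ) by omega),
            if_pos (le_refl (j:ℕ))] at h1
          norm_num at h1
        have hαγ : ⟪α, γ⟫ = ((if (i:ℕ) = n-2 then (1:ℝ) else 0) + (if (i:ℕ) = n-1 then 1 else 0))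
            - ((if (j:ℕ) = n-2 then 1 else 0) + (if (j:ℕ) = n-1 then 1 else 0)) := by
          rw [hform, hγe]
          simp only [inner_sub_left, inner_add_right, hee, convert_if]
          ring
        have hval : cpr α γ = ⟪α, γ⟫ := by
          unfold cpr
          rw [hγγ]
          ring
        have hor : cpr α γ = -1 ∨ cpr α γ = 0 := by
          rw [hval, hαγ]
          split_ifs <;> first | (exfalso; omega) | (left; norm_num; done) | (right; norm_num; done)
        rcases hor with h | h
        · exact h
        · exfalso
          have hle : ∀ x ∈ Δ.erase ι, cpr x γ ≤ 0 := by
            intro x hx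
            obtain ⟨k, hk, rfl⟩ := hP x hx
            have hnum : ⟪e ⟨k, (by omega : k < n)⟩ - e ⟨k+1, hk⟩, γ⟫ ≤ 0 := by
              rw [hγe]
              simp only [inner_sub_left, inner_add_right, hee, convert_if]
              split_ifs <;> first | (exfalso; omega) | (norm_num; done)
            unfold cpr
            rw [hγγ]
            linarith
          exact hαQ (mem_posQ γ hα hle h)
      · exfalso
        rw [hform, inner_add_left, hes, hes] at hαs
        norm_num at hαs
      · exfalso
        rw [hform, inner_neg_left, inner_add_left, hes, hes] at hαs
        norm_num at hαs
      · exfalso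
        rw [hform, hes] at hαs
        norm_num at hαs
      · exfalso
        rw [hform, inner_neg_left, hes] at hαs
        norm_num at hαs
  · -- type C_n, ι the first node, γ = 2 e₀ the highest root
    obtain ⟨n, hn, e, ⟨hon, hΦ, hΔ⟩, hιe, hγe⟩ := hC
    have hee := orthonormal_iff_ite.mp hon
    have emk : ∀ (a b : ℕ) (ha : a < n) (hb : b < n), a = b → e ⟨a, ha⟩ = e ⟨b, hb⟩ :=
      fun a b ha hb h => by subst h; rfl
    have hΔmem : ∀ x ∈ Δ, (∃ i : Fin n, ∃ h : (i:ℕ)+1 < n, x = e i - e ⟨(i:ℕ)+1, h⟩) ∨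
        x = (2:ℝ) • e ⟨n-1, by omega⟩ := by
      intro x hx
      have hx' : x ∈ (Δ : Set V) := hx
      rw [hΔ] at hx'
      rcases hx' with h | h
      · exact Or.inl h
      · exact Or.inr h.2
    -- ⟪ϖ, e j⟫ = 0 for 1 ≤ j
    have hbase : ⟪ϖ, e ⟨n-1, by omega⟩⟫ = 0 := by
      have hxΔ : (2:ℝ) • e ⟨n-1, (by omega : n-1 < n)⟩ ∈ Δ := by
        rw [← Finset.mem_coe, hΔ]
        exact Or.inr ⟨by omega, rfl⟩
      have hxι : (2:ℝ) • e ⟨n-1, (by omega : n-1 < n)⟩ ≠ ι := by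
        intro h
        rw [hιe] at h
        have h2 := congrArg (fun v => (inner ℝ v (e ⟨n-1, (by omega : n-1 < n)⟩) : ℝ)) h
        simp only [inner_sub_left, real_inner_smul_left, hee, Fin.mk.injEq] at h2
        split_ifs at h2 <;> first | omega | norm_num at h2
      have h0 := hϖ _ hxΔ
      rw [if_neg hxι] at h0
      unfold cpr at h0
      have hxx : ⟪(2:ℝ) • e ⟨n-1, (by omega : n-1 < n)⟩, (2:ℝ) • e ⟨n-1, (by omega : n-1 < n)⟩⟫
          = 4 := by
        simp only [real_inner_smul_left, real_inner_smul_right, hee, if_pos rfl]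
        norm_num
      rw [hxx, real_inner_smul_right] at h0
      field_simp at h0
      linarith
    have hzero : ∀ d : ℕ, ∀ j : ℕ, ∀ hj : j < n, 1 ≤ j → n - 1 - j ≤ d →
        ⟪ϖ, e ⟨j, hj⟩⟫ = 0 := by
      intro d
      induction d with
      | zero =>
        intro j hj h1 hd
        have : j = n - 1 := by omega
        subst this
        exact hbase
      | succ d ih =>
        intro j hj h1 hd
        by_cases hje : j = n - 1
        · subst hje; exact hbase
        · have hj2 : j + 1 < n := by omega
          have hxΔ : e ⟨j, hj⟩ - e ⟨j+1, hj2⟩ ∈ Δ := by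
            rw [← Finset.mem_coe, hΔ]
            exact Or.inl ⟨⟨j, hj⟩, hj2, rfl⟩
          have hxι : e ⟨j, hj⟩ - e ⟨j+1, hj2⟩ ≠ ι := by
            intro h
            rw [hιe] at h
            have h2 := congrArg (fun v => (inner ℝ v (e ⟨j, hj⟩) : ℝ)) h
            simp only [inner_sub_left, hee, Fin.mk.injEq] at h2
            split_ifs at h2 <;> first | omega | norm_num at h2
          have h0 := hϖ _ hxΔ
          rw [if_neg hxι] at h0
          unfold cpr at h0
          have hxx : ⟪e ⟨j, hj⟩ - e ⟨j+1, hj2⟩, e ⟨j, hj⟩ - e ⟨j+1, hj2⟩⟫ = 2 := by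
            simp only [inner_sub_left, inner_sub_right, hee, Fin.mk.injEq]
            rw [if_neg (show ¬ j + 1 = j by omega), if_neg (show ¬ j = j + 1 by omega)]
            norm_num
          rw [hxx, inner_sub_right] at h0
          have hnext := ih (j+1) hj2 (by omega) (by omega)
          rw [hnext] at h0
          linarith [h0]
    -- ⟪ϖ, e 0⟫ = 1
    have hϖ1 : ⟪ϖ, e ⟨1, by omega⟩⟫ = 0 := hzero (n-1) 1 (by omega) le_rfl (by omega)
    have hϖι := hϖ ι hι
    rw [if_pos rfl] at hϖι
    unfold cpr at hϖι
    have hιι : ⟪ι, ι⟫ = 2 := by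
      rw [hιe]
      simp only [inner_sub_left, inner_sub_right, hee, Fin.mk.injEq]
      rw [if_neg (show ¬ (0:ℕ) = 1 by omega), if_neg (show ¬ (1:ℕ) = 0 by omega)]
      norm_num
    rw [hιι, hιe, inner_sub_right, hϖ1] at hϖι
    have hϖ0 : ⟪ϖ, e ⟨0, by omega⟩⟫ = 1 := by
      field_simp at hϖι
      linarith
    constructor
    · unfold cpr
      rw [hγe, real_inner_smul_right, real_inner_smul_right, real_inner_smul_left, hϖ0, hee,
        if_pos rfl]
      norm_num
    · -- here I_Q = I_P, so the claim is vacuous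
      have hQ : ∀ j ∈ Δ.erase ι, cpr j γ = 0 := by
        intro j hj
        obtain ⟨hne, hjΔ⟩ := Finset.mem_erase.mp hj
        have hjγ : ⟪j, γ⟫ = 0 := by
          rcases hΔmem j hjΔ with ⟨i, hlt, rfl⟩ | rfl
          · by_cases hi0 : (i:ℕ) = 0
            · exfalso
              apply hne
              rw [hιe]
              have hie : i = ⟨0, by omega⟩ := Fin.ext_iff.mpr hi0
              exact congrArg₂ (fun a b => a - b) (congrArg e hie) (emk _ _ _ _ (by omega))
            · rw [hγe, real_inner_smul_right, inner_sub_left, hee, hee]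
              rw [if_neg (fun h => hi0 (by rw [h])),
                if_neg (fun h => by have h' : (i:ℕ) + 1 = 0 := Fin.ext_iff.mp h; omega)]
              norm_num
          · rw [hγe, real_inner_smul_right, real_inner_smul_left, hee]
            rw [if_neg (fun h => by have h' : n - 1 = 0 := Fin.ext_iff.mp h; omega)]
            norm_num
        unfold cpr
        rw [hjγ]
        simp
      intro α hα hαQ
      rw [Finset.filter_true_of_mem hQ] at hαQ
      exact absurd hα hαQ
end
end

section
/- With the setup of the minuscule node ι and distinguished root γ, define W(γ) := { w ∈ W^P : wγ = −θ }. For every w ∈ W(γ), the product is length-subtractive: ℓ(w s_γ) = ℓ(w) − ℓ(s_γ). -/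
/- A combinatorial framework for reduced crystallographic root systems with a
chosen system of simple roots, realized inside a real inner product space.
Weyl group elements are represented as plain functions `V → V` that are
compositions of simple reflections; `len` is the Coxeter length. -/

noncomputable section
open Classical
open scoped RealInnerProductSpace

namespace Aux
open Pp Finset

variable {V : Type*} [NormedAddCommGroup V] [InnerProductSpace ℝ V]

lemma cpr_add (x y α : V) : cpr (x + y) α = cpr x α + cpr y α := by
  unfold cpr; rw [inner_add_left]; ring

lemma cpr_smul (t : ℝ) (x α : V) : cpr (t • x) α = t * cpr x α := by
  unfold cpr; rw [real_inner_smul_left]; ring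

lemma sref_linear (α : V) : IsLinearMap ℝ (sref α) := by
  constructor
  · intro x y; unfold sref; rw [cpr_add, add_smul]; abel
  · intro t x; unfold sref; rw [cpr_smul, smul_sub, smul_smul]

lemma sref_inner {α : V} (hα : ⟪α, α⟫ ≠ 0) (x y : V) :
    ⟪sref α x, sref α y⟫ = ⟪x, y⟫ := by
  unfold sref cpr
  rw [inner_sub_left, inner_sub_right, inner_sub_right, real_inner_smul_left,
    real_inner_smul_left, real_inner_smul_right, real_inner_smul_right]
  have h1 : ⟪α, y⟫ = ⟪y, α⟫ := real_inner_comm _ _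
  have h2 : ⟪α, x⟫ = ⟪x, α⟫ := real_inner_comm _ _
  field_simp [h1, h2]
  rw [h1]
  ring

lemma sref_sref {α : V} (hα : ⟪α, α⟫ ≠ 0) (x : V) : sref α (sref α x) = x := by
  unfold sref cpr
  rw [inner_sub_left, real_inner_smul_left]
  field_simp
  module

lemma sref_self {α : V} (hα : ⟪α, α⟫ ≠ 0) : sref α α = -α := by
  unfold sref cpr
  field_simp
  module

/-- product of the reflections in the list -/
def wprod (l : List V) : V → V := (l.map sref).foldr (· ∘ ·) id

@[simp] lemma wprod_nil : wprod ([] : List V) = id := rfl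

@[simp] lemma wprod_cons (a : V) (l : List V) :
    wprod (a :: l) = sref a ∘ wprod l := rfl

lemma wprod_append (l l' : List V) :
    wprod (l ++ l') = wprod l ∘ wprod l' := by
  induction l with
  | nil => rfl
  | cons a l ih => simp [ih]; rfl

lemma isWord_iff {Δ : Finset V} {w : V → V} {n : ℕ} :
    IsWord Δ w n ↔ ∃ l : List V, l.length = n ∧ (∀ α ∈ l, α ∈ Δ) ∧ w = wprod l :=
  Iff.rfl

end Aux
namespace Aux
open Pp Finset

variable {V : Type*} [NormedAddCommGroup V] [InnerProductSpace ℝ V]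
variable {Φ Δ : Finset V}

lemma root_inner_pos (h : IsRS Φ Δ) {α : V} (hα : α ∈ Φ) : (0:ℝ) < ⟪α, α⟫ := by
  have : α ≠ 0 := fun e => h.zero_not_mem (e ▸ hα)
  exact lt_of_le_of_ne real_inner_self_nonneg (Ne.symm (inner_self_ne_zero.2 this))

lemma root_inner_ne (h : IsRS Φ Δ) {α : V} (hα : α ∈ Φ) : ⟪α, α⟫ ≠ (0:ℝ) :=
  ne_of_gt (root_inner_pos h hα)

section words
variable (h : IsRS Φ Δ) {l : List V} (hl : ∀ α ∈ l, α ∈ Δ)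
include h hl

omit h in
lemma wprod_linear : IsLinearMap ℝ (wprod l) := by
  induction l with
  | nil => exact ⟨fun _ _ => rfl, fun _ _ => rfl⟩
  | cons a t ih =>
    have iht := ih (fun α hα => hl α (List.mem_cons_of_mem _ hα))
    have ha := sref_linear (V := V) a
    constructor
    · intro x y; simp only [wprod_cons, Function.comp_apply, iht.map_add, ha.map_add]
    · intro c x; simp only [wprod_cons, Function.comp_apply, iht.map_smul, ha.map_smul]

lemma wprod_inner (x y : V) : ⟪wprod l x, wprod l y⟫ = ⟪x, y⟫ := by
  induction l with
  | nil => rfl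
  | cons a t ih =>
    have ha : a ∈ Δ := hl a List.mem_cons_self
    have iht := ih (fun α hα => hl α (List.mem_cons_of_mem _ hα))
    simp only [wprod_cons, Function.comp_apply]
    rw [sref_inner (root_inner_ne h (h.simple_mem a ha)), iht]

lemma wprod_root {β : V} (hβ : β ∈ Φ) : wprod l β ∈ Φ := by
  induction l with
  | nil => exact hβ
  | cons a t ih =>
    have ha : a ∈ Δ := hl a List.mem_cons_self
    have iht := ih (fun α hα => hl α (List.mem_cons_of_mem _ hα))
    exact h.refl_mem a (h.simple_mem a ha) _ iht

lemma wprod_reverse_apply (x : V) : wprod l.reverse (wprod l x) = x := by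
  induction l with
  | nil => rfl
  | cons a t ih =>
    have ha : a ∈ Δ := hl a List.mem_cons_self
    have iht := ih (fun α hα => hl α (List.mem_cons_of_mem _ hα))
    have e1 : wprod (a :: t) x = sref a (wprod t x) := rfl
    rw [List.reverse_cons, wprod_append, e1]
    show wprod t.reverse (wprod [a] (sref a (wprod t x))) = x
    show wprod t.reverse (sref a (sref a (wprod t x))) = x
    rw [sref_sref (root_inner_ne h (h.simple_mem a ha)), iht]

end words

lemma wprod_conj (h : IsRS Φ Δ) {l : List V} (hl : ∀ α ∈ l, α ∈ Δ)
    {α : V} (hα : α ∈ Φ) (x : V) :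
    sref (wprod l α) (wprod l x) = wprod l (sref α x) := by
  have lin := wprod_linear hl
  have hcpr : cpr (wprod l x) (wprod l α) = cpr x α := by
    unfold cpr; rw [wprod_inner h hl, wprod_inner h hl]
  unfold sref
  rw [hcpr, ← lin.map_smul, ← lin.map_sub]

end Aux
namespace Aux
open Pp Finset

variable {V : Type*} [NormedAddCommGroup V] [InnerProductSpace ℝ V]
variable {Φ Δ : Finset V}

lemma coeff_unique (h : IsRS Φ Δ) {c d : V → ℝ}
    (hcd : ∑ α ∈ Δ, c α • α = ∑ α ∈ Δ, d α • α) : ∀ α ∈ Δ, c α = d α := by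
  have h0 : ∑ α ∈ Δ, (c α - d α) • α = 0 := by
    rw [Finset.sum_congr rfl (fun α _ => sub_smul (c α) (d α) α),
      Finset.sum_sub_distrib, hcd, sub_self]
  have h1 : ∑ a : {x // x ∈ Δ}, (c a.1 - d a.1) • (a.1 : V) = 0 := by
    rw [Finset.univ_eq_attach, Finset.sum_attach Δ (fun α => (c α - d α) • α)]
    exact h0
  intro α hα
  have := linearIndependent_iff'.mp h.simple_indep Finset.univ
    (fun a => c a.1 - d a.1) h1 ⟨α, hα⟩ (Finset.mem_univ _)
  linarith [show c α - d α = 0 from this]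

lemma mem_Pos {β : V} : β ∈ Pos Φ Δ ↔ β ∈ Φ ∧
    ∃ c : V → ℝ, (∀ α ∈ Δ, 0 ≤ c α) ∧ β = ∑ α ∈ Δ, c α • α := by
  unfold Pos; rw [Finset.mem_filter]

lemma Pos_sub : Pos Φ Δ ⊆ Φ := Finset.filter_subset _ _

/-- positive and negative cannot both hold -/
lemma pos_neg_disjoint (h : IsRS Φ Δ) {β : V} (hβ : β ∈ Pos Φ Δ) :
    -β ∉ Pos Φ Δ := by
  intro hnβ
  obtain ⟨hβΦ, c, hc, hcβ⟩ := mem_Pos.mp hβ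
  obtain ⟨hnβΦ, d, hd, hdβ⟩ := mem_Pos.mp hnβ
  have hsum : ∑ α ∈ Δ, (c α + d α) • α = ∑ α ∈ Δ, (0:ℝ) • α := by
    have : β + -β = 0 := by abel
    rw [Finset.sum_congr rfl (fun α _ => add_smul (c α) (d α) α),
      Finset.sum_add_distrib, ← hcβ, ← hdβ]
    simp [this]
  have hzero := coeff_unique h hsum
  have hβ0 : β = 0 := by
    rw [hcβ]
    apply Finset.sum_eq_zero
    intro α hα
    have h1 := hzero α hα
    have h2 := hc α hα
    have h3 := hd α hα
    have : c α = 0 := by linarith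
    rw [this, zero_smul]
  exact h.zero_not_mem (hβ0 ▸ hβΦ)

lemma trichotomy (h : IsRS Φ Δ) {β : V} (hβ : β ∈ Φ) (hβn : β ∉ Pos Φ Δ) :
    -β ∈ Pos Φ Δ := (h.pos_or_neg β hβ).resolve_left hβn

lemma simple_pos (h : IsRS Φ Δ) {α : V} (hα : α ∈ Δ) : α ∈ Pos Φ Δ := by
  refine mem_Pos.mpr ⟨h.simple_mem α hα, fun v => if v = α then 1 else 0, ?_, ?_⟩
  · intro a _; dsimp only; split <;> norm_num
  · rw [Finset.sum_eq_single α]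
    · simp
    · intro b _ hb; simp [hb]
    · intro habs; exact absurd hα habs

/-- single-coefficient expansion -/
lemma single_expand {α : V} (hα : α ∈ Δ) (t : ℝ) :
    ∑ α' ∈ Δ, (fun v => if v = α then t else 0) α' • α' = t • α := by
  rw [Finset.sum_eq_single α]
  · simp
  · intro b _ hb; simp [hb]
  · intro habs; exact absurd hα habs

/-- Lemma A : a simple reflection permutes the positive roots other than α -/
lemma simple_perm (h : IsRS Φ Δ) {α β : V} (hα : α ∈ Δ) (hβ : β ∈ Pos Φ Δ)
    (hne : β ≠ α) : sref α β ∈ Pos Φ Δ := by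
  obtain ⟨hβΦ, c, hc, hcβ⟩ := mem_Pos.mp hβ
  have hαΦ : α ∈ Φ := h.simple_mem α hα
  have hsΦ : sref α β ∈ Φ := h.refl_mem α hαΦ β hβΦ
  by_contra hneg
  have hns : -sref α β ∈ Pos Φ Δ := trichotomy h hsΦ hneg
  obtain ⟨_, d, hd, hdβ⟩ := mem_Pos.mp hns
  -- β + (-sref α β) = cpr β α • α
  have key : ∑ α' ∈ Δ, (c α' + d α') • α' =
      ∑ α' ∈ Δ, (fun v => if v = α then cpr β α else 0) α' • α' := by
    rw [single_expand hα]
    rw [Finset.sum_congr rfl (fun a _ => add_smul (c a) (d a) a),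
      Finset.sum_add_distrib, ← hcβ, ← hdβ]
    unfold sref
    abel
  have huniq := coeff_unique h key
  -- all coefficients of β except at α vanish
  have hzero : ∀ a ∈ Δ, a ≠ α → c a = 0 := by
    intro a ha hne'
    have h1 := huniq a ha
    simp only [hne', if_neg, if_false] at h1
    have h2 := hc a ha
    have h3 := hd a ha
    linarith
  have hβα : β = c α • α := by
    rw [hcβ, Finset.sum_eq_single α]
    · intro b hb hne'; rw [hzero b hb hne', zero_smul]
    · intro habs; exact absurd hα habs
  have := h.reduced α hαΦ (c α) (by rw [← hβα]; exact_mod_cast hβΦ)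
  rcases this with h1 | h1
  · exact hne (by rw [hβα, h1, one_smul])
  · have := hc α hα
    rw [h1] at this; linarith

/-- Corollary: if a simple reflection makes a positive root negative, it is α -/
lemma simple_inv (h : IsRS Φ Δ) {α β : V} (hα : α ∈ Δ) (hβ : β ∈ Pos Φ Δ)
    (hneg : -sref α β ∈ Pos Φ Δ) : β = α := by
  by_contra hne
  exact pos_neg_disjoint h (simple_perm h hα hβ hne) hneg

end Aux
namespace Aux
open Pp Finset

variable {V : Type*} [NormedAddCommGroup V] [InnerProductSpace ℝ V]

/-- inversion number -/
def invc (Φ Δ : Finset V) (w : V → V) : ℕ :=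
  ((Pos Φ Δ).filter fun β => -w β ∈ Pos Φ Δ).card

variable {Φ Δ : Finset V}

lemma weyl_iff {w : V → V} : w ∈ Weyl Δ ↔
    ∃ l : List V, (∀ α ∈ l, α ∈ Δ) ∧ w = wprod l := by
  constructor
  · rintro ⟨n, l, _, hl, hw⟩; exact ⟨l, hl, hw⟩
  · rintro ⟨l, hl, hw⟩; exact ⟨l.length, l, rfl, hl, hw⟩

lemma weyl_comp {w u : V → V} (hw : w ∈ Weyl Δ) (hu : u ∈ Weyl Δ) :
    w ∘ u ∈ Weyl Δ := by
  obtain ⟨l, hl, rfl⟩ := weyl_iff.mp hw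
  obtain ⟨m, hm, rfl⟩ := weyl_iff.mp hu
  refine weyl_iff.mpr ⟨l ++ m, ?_, (wprod_append l m).symm⟩
  intro α hα
  rcases List.mem_append.mp hα with h' | h'
  exacts [hl α h', hm α h']

lemma sref_mem_weyl_of_simple {α : V} (hα : α ∈ Δ) : sref α ∈ Weyl Δ := by
  refine weyl_iff.mpr ⟨[α], by simpa using hα, ?_⟩
  funext x; rfl

lemma weyl_linear {w : V → V} (hw : w ∈ Weyl Δ) : IsLinearMap ℝ w := by
  obtain ⟨l, hl, rfl⟩ := weyl_iff.mp hw
  exact wprod_linear hl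

lemma weyl_root (h : IsRS Φ Δ) {w : V → V} (hw : w ∈ Weyl Δ) {β : V}
    (hβ : β ∈ Φ) : w β ∈ Φ := by
  obtain ⟨l, hl, rfl⟩ := weyl_iff.mp hw
  exact wprod_root h hl hβ

lemma weyl_inner (h : IsRS Φ Δ) {w : V → V} (hw : w ∈ Weyl Δ) (x y : V) :
    ⟪w x, w y⟫ = ⟪x, y⟫ := by
  obtain ⟨l, hl, rfl⟩ := weyl_iff.mp hw
  exact wprod_inner h hl x y

lemma sref_involutive (h : IsRS Φ Δ) {α : V} (hα : α ∈ Φ) :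
    Function.Involutive (sref α) := fun x => sref_sref (root_inner_ne h hα) x

/-- the inversion step lemma, positive case -/
lemma invc_step_pos (h : IsRS Φ Δ) {α : V} (hα : α ∈ Δ) {w : V → V}
    (hw : w ∈ Weyl Δ) (hwα : w α ∈ Pos Φ Δ) :
    invc Φ Δ (w ∘ sref α) = invc Φ Δ w + 1 := by
  classical
  have hαΦ : α ∈ Φ := h.simple_mem α hα
  have hinv := sref_involutive h hαΦ
  have hlin := weyl_linear hw
  set S : (V → V) → Finset V := fun u => (Pos Φ Δ).filter fun β => -u β ∈ Pos Φ Δ with hS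
  have himg : (S (w ∘ sref α)).erase α = Finset.image (sref α) ((S w).erase α) := by
    ext x
    simp only [Finset.mem_erase, Finset.mem_filter, Finset.mem_image, hS]
    constructor
    · rintro ⟨hxα, hx, hwx⟩
      refine ⟨sref α x, ⟨?_, ?_, ?_⟩, hinv x⟩
      · intro e
        have : x = -α := by
          have := congrArg (sref α) e
          rw [hinv, sref_self (root_inner_ne h hαΦ)] at this
          exact this
        exact pos_neg_disjoint h (simple_pos h hα) (by rw [← this]; exact hx)
      · exact simple_perm h hα hx hxα
      · exact hwx
    · rintro ⟨β, ⟨hβα, hβ, hwβ⟩, rfl⟩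
      refine ⟨?_, simple_perm h hα hβ hβα, ?_⟩
      · intro e
        have : β = -α := by
          have := congrArg (sref α) e
          rw [hinv, sref_self (root_inner_ne h hαΦ)] at this
          exact this
        exact pos_neg_disjoint h (simple_pos h hα) (by rw [← this]; exact hβ)
      · simpa [Function.comp_apply, hinv β] using hwβ
  have hcard : ((S (w ∘ sref α)).erase α).card = ((S w).erase α).card := by
    rw [himg, Finset.card_image_of_injective _ hinv.injective]
  have hα_notin : α ∉ S w := by
    simp only [hS, Finset.mem_filter, not_and]
    intro _
    exact pos_neg_disjoint h hwα
  have hα_in : α ∈ S (w ∘ sref α) := by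
    simp only [hS, Finset.mem_filter]
    refine ⟨simple_pos h hα, ?_⟩
    have : (w ∘ sref α) α = -(w α) := by
      simp only [Function.comp_apply, sref_self (root_inner_ne h hαΦ)]
      exact hlin.map_neg α
    rw [this, neg_neg]
    exact hwα
  have h1 : (S w).erase α = S w := Finset.erase_eq_of_notMem hα_notin
  have h2 : (S (w ∘ sref α)).card = ((S (w ∘ sref α)).erase α).card + 1 :=
    (Finset.card_erase_add_one hα_in).symm
  show (S (w ∘ sref α)).card = (S w).card + 1
  rw [h2, hcard, h1]

/-- the inversion step lemma, negative case -/
lemma invc_step_neg (h : IsRS Φ Δ) {α : V} (hα : α ∈ Δ) {w : V → V}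
    (hw : w ∈ Weyl Δ) (hwα : -(w α) ∈ Pos Φ Δ) :
    invc Φ Δ (w ∘ sref α) + 1 = invc Φ Δ w := by
  have hαΦ : α ∈ Φ := h.simple_mem α hα
  have hinv := sref_involutive h hαΦ
  have hw' : w ∘ sref α ∈ Weyl Δ := weyl_comp hw (sref_mem_weyl_of_simple hα)
  have hlin := weyl_linear hw
  have hwsα : (w ∘ sref α) α ∈ Pos Φ Δ := by
    have : (w ∘ sref α) α = -(w α) := by
      simp only [Function.comp_apply, sref_self (root_inner_ne h hαΦ)]
      exact hlin.map_neg α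
    rw [this]; exact hwα
  have := invc_step_pos h hα hw' hwsα
  have hws : (w ∘ sref α) ∘ sref α = w := by
    funext x; simp only [Function.comp_apply, hinv x]
  rw [hws] at this
  omega

lemma isWord_sref {α : V} (hα : α ∈ Δ) : IsWord Δ (sref α) 1 :=
  ⟨[α], rfl, by simpa using hα, by funext x; rfl⟩

lemma len_le_of_isWord {w : V → V} {n : ℕ} (hn : IsWord Δ w n) : len Δ w ≤ n :=
  Nat.sInf_le hn

lemma exists_reduced {w : V → V} (hw : w ∈ Weyl Δ) : IsWord Δ w (len Δ w) := by
  obtain ⟨n, hn⟩ := hw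
  have hmem : n ∈ {m | IsWord Δ w m} := hn
  exact Nat.sInf_mem ⟨n, hmem⟩

lemma exists_reduced' {w : V → V} (hw : w ∈ Weyl Δ) :
    ∃ l : List V, l.length = len Δ w ∧ (∀ α ∈ l, α ∈ Δ) ∧ w = wprod l :=
  isWord_iff.mp (exists_reduced hw)

lemma trichotomy' (h : IsRS Φ Δ) {β : V} (hβ : β ∈ Φ) (hn : -β ∉ Pos Φ Δ) :
    β ∈ Pos Φ Δ := (h.pos_or_neg β hβ).resolve_right hn

lemma isWord_comp {w u : V → V} {m n : ℕ} (hw : IsWord Δ w m) (hu : IsWord Δ u n) :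
    IsWord Δ (w ∘ u) (m + n) := by
  obtain ⟨l, hlen, hl, rfl⟩ := hw
  obtain ⟨l', hlen', hl', rfl⟩ := hu
  refine ⟨l ++ l', by simp [hlen, hlen'], ?_, (wprod_append l l').symm⟩
  intro α hα
  rcases List.mem_append.mp hα with h' | h'
  exacts [hl α h', hl' α h']

lemma len_comp_sref_ge {w : V → V} (hw : w ∈ Weyl Δ) {α : V} (hα : α ∈ Δ)
    (hαΦ : ⟪α, α⟫ ≠ (0:ℝ)) : len Δ w ≤ len Δ (w ∘ sref α) + 1 := by
  have h1 : IsWord Δ (w ∘ sref α) (len Δ (w ∘ sref α)) :=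
    exists_reduced (weyl_comp hw (sref_mem_weyl_of_simple hα))
  have h2 : IsWord Δ ((w ∘ sref α) ∘ sref α) (len Δ (w ∘ sref α) + 1) :=
    isWord_comp h1 (isWord_sref hα)
  have h3 : (w ∘ sref α) ∘ sref α = w := by
    funext x; simp only [Function.comp_apply, sref_sref hαΦ]
  rw [h3] at h2
  exact len_le_of_isWord h2

/-- exchange lemma -/
lemma exchange (h : IsRS Φ Δ) : ∀ l : List V, (∀ α ∈ l, α ∈ Δ) →
    ∀ α ∈ Δ, -(wprod l α) ∈ Pos Φ Δ →
    ∃ l' : List V, (∀ β ∈ l', β ∈ Δ) ∧ l'.length + 1 = l.length ∧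
      wprod l ∘ sref α = wprod l' := by
  intro l
  induction l with
  | nil =>
    intro _ α hα hneg
    exact absurd hneg (pos_neg_disjoint h (simple_pos h hα))
  | cons b t ih =>
    intro hl α hα hneg
    have hb : b ∈ Δ := hl b List.mem_cons_self
    have ht : ∀ β ∈ t, β ∈ Δ := fun β hβ => hl β (List.mem_cons_of_mem _ hβ)
    have hαΦ : α ∈ Φ := h.simple_mem α hα
    have huα : wprod t α ∈ Φ := wprod_root h ht hαΦ
    by_cases hcase : -(wprod t α) ∈ Pos Φ Δ
    · obtain ⟨l', hl', hlen, heq⟩ := ih ht α hα hcase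
      refine ⟨b :: l', ?_, by simpa using hlen, ?_⟩
      · intro β hβ
        rcases List.mem_cons.mp hβ with rfl | h'
        exacts [hb, hl' β h']
      · have : wprod (b :: t) ∘ sref α = sref b ∘ (wprod t ∘ sref α) := rfl
        rw [this, heq]; rfl
    · have hpos : wprod t α ∈ Pos Φ Δ := trichotomy' h huα hcase
      have hneg' : -(sref b (wprod t α)) ∈ Pos Φ Δ := by
        simpa [Function.comp_apply] using hneg
      have heqb : wprod t α = b := simple_inv h hb hpos hneg'
      refine ⟨t, ht, by simp, ?_⟩
      funext x
      have hconj := wprod_conj h ht hαΦ x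
      -- sref (wprod t α) (wprod t x) = wprod t (sref α x)
      rw [heqb] at hconj
      show sref b (wprod t (sref α x)) = wprod t x
      rw [← hconj, sref_sref (root_inner_ne h (h.simple_mem b hb))]

lemma len_descent (h : IsRS Φ Δ) {α : V} (hα : α ∈ Δ) {w : V → V}
    (hw : w ∈ Weyl Δ) (hneg : -(w α) ∈ Pos Φ Δ) :
    len Δ (w ∘ sref α) + 1 = len Δ w := by
  obtain ⟨l, hlen, hl, hweq⟩ := exists_reduced' hw
  have hneg' : -(wprod l α) ∈ Pos Φ Δ := by rw [← hweq]; exact hneg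
  obtain ⟨l', hl', hlen', heq⟩ := exchange h l hl α hα hneg'
  have h1 : IsWord Δ (w ∘ sref α) l'.length :=
    isWord_iff.mpr ⟨l', rfl, hl', by rw [hweq]; exact heq⟩
  have h2 : len Δ (w ∘ sref α) ≤ l'.length := len_le_of_isWord h1
  have h3 : len Δ w ≤ len Δ (w ∘ sref α) + 1 :=
    len_comp_sref_ge hw hα (root_inner_ne h (h.simple_mem α hα))
  omega

lemma len_ascent (h : IsRS Φ Δ) {α : V} (hα : α ∈ Δ) {w : V → V}
    (hw : w ∈ Weyl Δ) (hpos : w α ∈ Pos Φ Δ) :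
    len Δ (w ∘ sref α) = len Δ w + 1 := by
  have hαΦ : α ∈ Φ := h.simple_mem α hα
  have hw' : w ∘ sref α ∈ Weyl Δ := weyl_comp hw (sref_mem_weyl_of_simple hα)
  have hneg : -((w ∘ sref α) α) ∈ Pos Φ Δ := by
    have : (w ∘ sref α) α = -(w α) := by
      simp only [Function.comp_apply, sref_self (root_inner_ne h hαΦ)]
      exact (weyl_linear hw).map_neg α
    rw [this, neg_neg]; exact hpos
  have := len_descent h hα hw' hneg
  have hws : (w ∘ sref α) ∘ sref α = w := by
    funext x
    simp only [Function.comp_apply, sref_sref (root_inner_ne h hαΦ)]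
  rw [hws] at this
  omega

lemma invc_id (h : IsRS Φ Δ) : invc Φ Δ (id : V → V) = 0 := by
  unfold invc
  rw [Finset.card_eq_zero, Finset.filter_false_of_mem]
  intro β hβ
  exact pos_neg_disjoint h hβ

lemma len_eq_invc (h : IsRS Φ Δ) : ∀ n : ℕ, ∀ w : V → V, w ∈ Weyl Δ →
    len Δ w = n → len Δ w = invc Φ Δ w := by
  intro n
  induction n with
  | zero =>
    intro w hw hlen
    obtain ⟨l, hlen', _, hweq⟩ := exists_reduced' hw
    rw [hlen] at hlen'
    have : l = [] := List.length_eq_zero_iff.mp hlen'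
    subst this
    rw [hlen, hweq]
    exact (invc_id h).symm
  | succ n ih =>
    intro w hw hlen
    obtain ⟨l, hlen', hl, hweq⟩ := exists_reduced' hw
    rw [hlen] at hlen'
    rcases List.eq_nil_or_concat l with rfl | ⟨L, b, rfl⟩
    · simp at hlen'
    · have hLb : L.length + 1 = n + 1 := by simpa using hlen'
      have hL : ∀ α ∈ L, α ∈ Δ := fun α hα => hl α (by simp [hα])
      have hb : b ∈ Δ := hl b (by simp)
      have hwd : w = wprod L ∘ sref b := by
        rw [hweq, List.concat_eq_append, wprod_append]
        rfl
      have huW : wprod L ∈ Weyl Δ := weyl_iff.mpr ⟨L, hL, rfl⟩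
      have hlenu_le : len Δ (wprod L) ≤ n := by
        have : IsWord Δ (wprod L) L.length := isWord_iff.mpr ⟨L, rfl, hL, rfl⟩
        have := len_le_of_isWord this
        omega
      have hlenu_ge : n ≤ len Δ (wprod L) := by
        have h3 : len Δ w ≤ len Δ (wprod L ∘ sref b) := by rw [← hwd]
        have h4 : IsWord Δ (wprod L ∘ sref b) (len Δ (wprod L) + 1) :=
          isWord_comp (exists_reduced huW) (isWord_sref hb)
        have h5 := len_le_of_isWord h4
        omega
      have hlenu : len Δ (wprod L) = n := le_antisymm hlenu_le hlenu_ge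
      have hbΦ : b ∈ Φ := h.simple_mem b hb
      have hubΦ : wprod L b ∈ Φ := wprod_root h hL hbΦ
      by_cases hcase : -(wprod L b) ∈ Pos Φ Δ
      · exfalso
        have := len_descent h hb huW hcase
        rw [← hwd, hlen, hlenu] at this
        omega
      · have hpos : wprod L b ∈ Pos Φ Δ := trichotomy' h hubΦ hcase
        have hstep := invc_step_pos h hb huW hpos
        rw [← hwd] at hstep
        rw [hlen, hstep, ← ih (wprod L) huW hlenu, hlenu]

end Aux
namespace Aux
open Pp Finset

variable {V : Type*} [NormedAddCommGroup V] [InnerProductSpace ℝ V]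
variable {Φ Δ : Finset V}

lemma sref_erase_mem (h : IsRS Φ Δ) {α β : V} (hα : α ∈ Δ)
    (hβ : β ∈ (Pos Φ Δ).erase α) : sref α β ∈ (Pos Φ Δ).erase α := by
  have hαΦ := h.simple_mem α hα
  obtain ⟨hne, hβP⟩ := Finset.mem_erase.mp hβ
  refine Finset.mem_erase.mpr ⟨?_, simple_perm h hα hβP hne⟩
  intro e
  have : β = -α := by
    have := congrArg (sref α) e
    rw [sref_sref (root_inner_ne h hαΦ), sref_self (root_inner_ne h hαΦ)] at this
    exact this
  exact pos_neg_disjoint h (simple_pos h hα) (by rw [← this]; exact hβP)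

lemma sum_pos_sref (h : IsRS Φ Δ) {α : V} (hα : α ∈ Δ) :
    ∑ β ∈ Pos Φ Δ, sref α β = (∑ β ∈ Pos Φ Δ, β) - (2:ℝ) • α := by
  classical
  have hαP : α ∈ Pos Φ Δ := simple_pos h hα
  have hαΦ := h.simple_mem α hα
  have hinv := sref_involutive h hαΦ
  rw [← Finset.add_sum_erase _ (fun β => sref α β) hαP,
    ← Finset.add_sum_erase (Pos Φ Δ) (fun β => β) hαP]
  have hsum : ∑ β ∈ (Pos Φ Δ).erase α, sref α β = ∑ β ∈ (Pos Φ Δ).erase α, β := by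
    apply Finset.sum_bijective (sref α) hinv.bijective
    · intro β
      constructor
      · exact sref_erase_mem h hα
      · intro hβ
        have := sref_erase_mem h hα hβ
        rwa [hinv β] at this
    · intro β _; rfl
  rw [hsum, sref_self (root_inner_ne h hαΦ)]
  have : (2:ℝ) • α = α + α := two_smul ℝ α
  rw [this]; abel

lemma inner_sumpos (h : IsRS Φ Δ) {α : V} (hα : α ∈ Δ) :
    ⟪∑ β ∈ Pos Φ Δ, β, α⟫ = ⟪α, α⟫ := by
  have hαΦ := h.simple_mem α hα
  have hlin := sref_linear (V := V) α
  set S := ∑ β ∈ Pos Φ Δ, β with hSdef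
  have h1 : sref α S = S - (2:ℝ) • α := by
    have : sref α S = ∑ β ∈ Pos Φ Δ, sref α β := by
      rw [hSdef]
      exact map_sum (IsLinearMap.mk' (sref α) hlin) _ _
    rw [this, sum_pos_sref h hα]
  have h2 : cpr S α • α = (2:ℝ) • α := by
    have := h1
    unfold sref at this
    have h3 : S - cpr S α • α = S - (2:ℝ) • α := this
    have h4 := congrArg (fun x => x - S) h3
    simp only [sub_sub_cancel_left, neg_inj] at h4
    exact h4
  have h4 : cpr S α = 2 := by
    have h5 : (cpr S α - 2) • α = 0 := by
      rw [sub_smul, h2, sub_self]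
    rcases smul_eq_zero.mp h5 with h6 | h6
    · linarith [h6]
    · exact absurd h6 (fun e => h.zero_not_mem (e ▸ hαΦ))
  unfold cpr at h4
  have hne := root_inner_ne h hαΦ
  field_simp at h4
  linarith

end Aux
namespace Aux
open Pp Finset

variable {V : Type*} [NormedAddCommGroup V] [InnerProductSpace ℝ V]
variable {Φ Δ : Finset V}

lemma wprod_singleton (a : V) : wprod [a] = sref a := funext fun _ => rfl

lemma exists_simple_inner_pos (h : IsRS Φ Δ) {β : V} (hβ : β ∈ Pos Φ Δ)
    (hβΔ : β ∉ Δ) : ∃ α ∈ Δ, 0 < ⟪β, α⟫ ∧ β ≠ α := by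
  obtain ⟨hβΦ, c, hc, hcβ⟩ := mem_Pos.mp hβ
  by_contra hcon
  push_neg at hcon
  have hall : ∀ α ∈ Δ, ⟪β, α⟫ ≤ 0 := by
    intro α hα
    by_contra hlt
    push_neg at hlt
    have heq := hcon α hα hlt
    exact hβΔ (heq ▸ hα)
  have hle : ⟪β, β⟫ ≤ 0 := by
    calc ⟪β, β⟫ = ⟪β, ∑ α ∈ Δ, c α • α⟫ := by rw [← hcβ]
      _ = ∑ α ∈ Δ, c α * ⟪β, α⟫ := by
          rw [inner_sum]
          exact Finset.sum_congr rfl fun α _ => real_inner_smul_right β α (c α)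
      _ ≤ 0 := Finset.sum_nonpos fun α hα =>
          mul_nonpos_iff.mpr (Or.inl ⟨hc α hα, hall α hα⟩)
  linarith [root_inner_pos h hβΦ]

lemma sref_mem_weyl_aux (h : IsRS Φ Δ) : ∀ (k : ℕ) (β : V), β ∈ Pos Φ Δ →
    ((Pos Φ Δ).filter
      (fun x => ⟪x, ∑ δ ∈ Pos Φ Δ, δ⟫ < ⟪β, ∑ δ ∈ Pos Φ Δ, δ⟫)).card ≤ k →
    sref β ∈ Weyl Δ := by
  intro k
  induction k using Nat.strong_induction_on with
  | _ k ih =>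
    intro β hβ hk
    by_cases hβΔ : β ∈ Δ
    · exact sref_mem_weyl_of_simple hβΔ
    obtain ⟨α, hα, hip, hne⟩ := exists_simple_inner_pos h hβ hβΔ
    have hαΦ := h.simple_mem α hα
    have hβΦ : β ∈ Φ := Pos_sub hβ
    have hβ'P : sref α β ∈ Pos Φ Δ := simple_perm h hα hβ hne
    have hβ'Φ : sref α β ∈ Φ := Pos_sub hβ'P
    have hSα : ⟪α, ∑ δ ∈ Pos Φ Δ, δ⟫ = ⟪α, α⟫ := by
      rw [real_inner_comm]; exact inner_sumpos h hα
    have hcpr : 0 < cpr β α := by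
      unfold cpr
      have := root_inner_pos h hαΦ
      positivity
    have hlt : ⟪sref α β, ∑ δ ∈ Pos Φ Δ, δ⟫ < ⟪β, ∑ δ ∈ Pos Φ Δ, δ⟫ := by
      have he : sref α β = β - cpr β α • α := rfl
      rw [he, inner_sub_left, real_inner_smul_left, hSα]
      have := root_inner_pos h hαΦ
      nlinarith
    have hsub : (Pos Φ Δ).filter
        (fun x => ⟪x, ∑ δ ∈ Pos Φ Δ, δ⟫ < ⟪sref α β, ∑ δ ∈ Pos Φ Δ, δ⟫) ⊆
        (Pos Φ Δ).filter (fun x => ⟪x, ∑ δ ∈ Pos Φ Δ, δ⟫ < ⟪β, ∑ δ ∈ Pos Φ Δ, δ⟫) :=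
      by
        intro x hx
        simp only [Finset.mem_filter] at hx ⊢
        exact ⟨hx.1, lt_trans hx.2 hlt⟩
    have hcard : ((Pos Φ Δ).filter
        (fun x => ⟪x, ∑ δ ∈ Pos Φ Δ, δ⟫ < ⟪sref α β, ∑ δ ∈ Pos Φ Δ, δ⟫)).card <
        ((Pos Φ Δ).filter
        (fun x => ⟪x, ∑ δ ∈ Pos Φ Δ, δ⟫ < ⟪β, ∑ δ ∈ Pos Φ Δ, δ⟫)).card := by
      apply Finset.card_lt_card
      rw [Finset.ssubset_iff_of_subset hsub]
      refine ⟨sref α β, Finset.mem_filter.mpr ⟨hβ'P, hlt⟩, ?_⟩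
      simp only [Finset.mem_filter]
      exact fun ⟨_, habs⟩ => lt_irrefl _ habs
    have hW' : sref (sref α β) ∈ Weyl Δ := by
      refine ih _ (lt_of_lt_of_le hcard hk) (sref α β) hβ'P le_rfl
    have hsrefsref : sref α (sref α β) = β := sref_sref (root_inner_ne h hαΦ) β
    have hfun : sref β = sref α ∘ (sref (sref α β) ∘ sref α) := by
      funext y
      have hc := wprod_conj h (l := [α]) (by simpa using hα) hβ'Φ (sref α y)
      rw [wprod_singleton] at hc
      rw [sref_sref (root_inner_ne h hαΦ) y] at hc
      -- hc : sref (sref α (sref α β)) y = sref α (sref (sref α β) (sref α y))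
      rw [hsrefsref] at hc
      exact hc
    rw [hfun]
    exact weyl_comp (sref_mem_weyl_of_simple hα)
      (weyl_comp hW' (sref_mem_weyl_of_simple hα))

lemma sref_weyl_of_pos (h : IsRS Φ Δ) {β : V} (hβ : β ∈ Pos Φ Δ) :
    sref β ∈ Weyl Δ :=
  sref_mem_weyl_aux h _ β hβ le_rfl

end Aux
namespace Aux
open Pp Finset

variable {V : Type*} [NormedAddCommGroup V] [InnerProductSpace ℝ V]
variable {Φ Δ : Finset V}

lemma theta_dominant (h : IsRS Φ Δ) {θ : V} (hθ : IsHighest Φ Δ θ) :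
    ∀ α ∈ Δ, 0 ≤ ⟪θ, α⟫ := by
  intro α hα
  have hαΦ := h.simple_mem α hα
  have hθΦ : θ ∈ Φ := Pos_sub hθ.1
  have hsΦ : sref α θ ∈ Φ := h.refl_mem α hαΦ θ hθΦ
  obtain ⟨c, hc, hceq⟩ := hθ.2 (sref α θ) hsΦ
  have hdiff : θ - sref α θ = cpr θ α • α := by
    unfold sref; abel
  have hkey : ∑ α' ∈ Δ, c α' • α' =
      ∑ α' ∈ Δ, (fun v => if v = α then cpr θ α else 0) α' • α' := by
    rw [single_expand hα, ← hdiff, hceq]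
  have huniq := coeff_unique h hkey α hα
  simp at huniq
  have hge : 0 ≤ cpr θ α := huniq ▸ hc α hα
  unfold cpr at hge
  have hpos := root_inner_pos h hαΦ
  by_contra hneg
  push_neg at hneg
  have : 2 * ⟪θ, α⟫ / ⟪α, α⟫ < 0 := div_neg_of_neg_of_pos (by linarith) hpos
  linarith

lemma pos_inner_theta (h : IsRS Φ Δ) {θ : V} (hθ : IsHighest Φ Δ θ)
    {x : V} (hx : x ∈ Pos Φ Δ) : 0 ≤ ⟪x, θ⟫ := by
  obtain ⟨hxΦ, c, hc, hcx⟩ := mem_Pos.mp hx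
  rw [hcx, sum_inner]
  apply Finset.sum_nonneg
  intro α hα
  rw [real_inner_smul_left]
  have := theta_dominant h hθ α hα
  rw [real_inner_comm] at this
  exact mul_nonneg (hc α hα) this

lemma inv_subset (h : IsRS Φ Δ) {θ γ : V} (hθ : IsHighest Φ Δ θ)
    {w : V → V} (hw : w ∈ Weyl Δ) (hwγ : w γ = -θ) (hγP : γ ∈ Pos Φ Δ) :
    ∀ β ∈ Pos Φ Δ, -(sref γ β) ∈ Pos Φ Δ → -(w β) ∈ Pos Φ Δ := by
  intro β hβP hneg
  have hγΦ : γ ∈ Φ := Pos_sub hγP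
  have hβΦ : β ∈ Φ := Pos_sub hβP
  have hγγ := root_inner_pos h hγΦ
  have hcpr : 0 < cpr β γ := by
    by_contra hle
    push_neg at hle
    obtain ⟨_, c, hc, hcβ⟩ := mem_Pos.mp hβP
    obtain ⟨_, d, hd, hdγ⟩ := mem_Pos.mp hγP
    have hmem : sref γ β ∈ Pos Φ Δ := by
      refine mem_Pos.mpr ⟨h.refl_mem γ hγΦ β hβΦ,
        fun v => c v + (-cpr β γ) * d v, ?_, ?_⟩
      · intro a ha
        have h1 := mul_nonneg (neg_nonneg.mpr hle) (hd a ha)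
        have h2 := hc a ha
        dsimp only
        linarith
      · have he : sref γ β = β + (-cpr β γ) • γ := by
          unfold sref; rw [neg_smul, ← sub_eq_add_neg]
        rw [he, hcβ, hdγ, Finset.smul_sum, ← Finset.sum_add_distrib]
        apply Finset.sum_congr rfl
        intro a _
        rw [add_smul, smul_smul]
    exact pos_neg_disjoint h hmem hneg
  have hβγ : 0 < ⟪β, γ⟫ := by
    unfold cpr at hcpr
    by_contra hle
    push_neg at hle
    have : 2 * ⟪β, γ⟫ / ⟪γ, γ⟫ ≤ 0 :=
      div_nonpos_of_nonpos_of_nonneg (by linarith) (le_of_lt hγγ)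
    linarith
  have hwβθ : ⟪w β, θ⟫ < 0 := by
    have h1 : ⟪w β, w γ⟫ = ⟪β, γ⟫ := weyl_inner h hw β γ
    rw [hwγ, inner_neg_right] at h1
    linarith
  have hwβΦ : w β ∈ Φ := weyl_root h hw hβΦ
  apply trichotomy h hwβΦ
  intro hmem
  have := pos_inner_theta h hθ hmem
  linarith

lemma invc_key (h : IsRS Φ Δ) {θ γ : V} (hθ : IsHighest Φ Δ θ)
    {w : V → V} (hw : w ∈ Weyl Δ) (hwγ : w γ = -θ) (hγP : γ ∈ Pos Φ Δ) :
    invc Φ Δ (w ∘ sref γ) + invc Φ Δ (sref γ) = invc Φ Δ w := by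
  classical
  have hγΦ : γ ∈ Φ := Pos_sub hγP
  have hinv := sref_involutive h hγΦ
  have hlin := sref_linear (V := V) γ
  have hwlin := weyl_linear hw
  set P := Pos Φ Δ with hP
  set A := P.filter (fun β => -(sref γ β) ∈ P) with hA
  set Sw := P.filter (fun β => -(w β) ∈ P) with hSw
  have hK : A ⊆ Sw := by
    intro β hβ
    simp only [hA, hSw, Finset.mem_filter] at hβ ⊢
    exact ⟨hβ.1, inv_subset h hθ hw hwγ hγP β hβ.1 hβ.2⟩
  have himg : P.filter (fun β => -((w ∘ sref γ) β) ∈ P) = (Sw \ A).image (sref γ) := by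
    ext x
    simp only [Finset.mem_filter, Finset.mem_image, Finset.mem_sdiff, Function.comp_apply]
    constructor
    · rintro ⟨hxP, hwx⟩
      have hxΦ : x ∈ Φ := Pos_sub hxP
      have hsΦ : sref γ x ∈ Φ := h.refl_mem γ hγΦ x hxΦ
      have hsP : sref γ x ∈ P := by
        by_contra hno
        have hnegP : -(sref γ x) ∈ P := trichotomy h hsΦ hno
        have hyA : -(sref γ x) ∈ A := by
          rw [hA, Finset.mem_filter]
          refine ⟨hnegP, ?_⟩
          have e1 : sref γ (-(sref γ x)) = -x := by rw [hlin.map_neg, hinv x]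
          rw [e1, neg_neg]
          exact hxP
        have hyS := hK hyA
        rw [hSw, Finset.mem_filter] at hyS
        have e2 : -(w (-(sref γ x))) = w (sref γ x) := by rw [hwlin.map_neg, neg_neg]
        rw [e2] at hyS
        exact pos_neg_disjoint h hyS.2 hwx
      refine ⟨sref γ x, ⟨?_, ?_⟩, hinv x⟩
      · rw [hSw, Finset.mem_filter]
        exact ⟨hsP, hwx⟩
      · intro hxA
        rw [hA, Finset.mem_filter] at hxA
        have := hxA.2
        rw [hinv x] at this
        exact pos_neg_disjoint h hxP this
    · rintro ⟨β, ⟨hβS, hβA⟩, rfl⟩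
      rw [hSw, Finset.mem_filter] at hβS
      have hβΦ : β ∈ Φ := Pos_sub hβS.1
      have hsΦ : sref γ β ∈ Φ := h.refl_mem γ hγΦ β hβΦ
      have hsP : sref γ β ∈ P := by
        apply trichotomy' h hsΦ
        intro hneg
        exact hβA (by rw [hA, Finset.mem_filter]; exact ⟨hβS.1, hneg⟩)
      refine ⟨hsP, ?_⟩
      rw [hinv β]
      exact hβS.2
  have hcard1 : (P.filter (fun β => -((w ∘ sref γ) β) ∈ P)).card = Sw.card - A.card := by
    rw [himg, Finset.card_image_of_injective _ hinv.injective, Finset.card_sdiff_of_subset hK]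
  have hle : A.card ≤ Sw.card := Finset.card_le_card hK
  show (P.filter fun β => -((w ∘ sref γ) β) ∈ P).card + A.card = Sw.card
  omega

end Aux
namespace Aux
open Pp Finset

variable {V : Type*} [NormedAddCommGroup V] [InnerProductSpace ℝ V]
variable {Φ Δ : Finset V}

lemma pos_of_dominant (h : IsRS Φ Δ) {x v : V} (hxΦ : x ∈ Φ)
    (hv : ∀ α ∈ Δ, 0 ≤ ⟪v, α⟫) (hx : 0 < ⟪v, x⟫) : x ∈ Pos Φ Δ := by
  apply trichotomy' h hxΦ
  intro hneg
  obtain ⟨_, c, hc, hcx⟩ := mem_Pos.mp hneg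
  have hge : 0 ≤ ⟪v, -x⟫ := by
    rw [hcx, inner_sum]
    exact Finset.sum_nonneg fun α hα => by
      rw [real_inner_smul_right]
      exact mul_nonneg (hc α hα) (hv α hα)
  rw [inner_neg_right] at hge
  linarith

lemma gamma_pos (h : IsRS Φ Δ) {ι γ : V} (hι : ι ∈ Δ)
    (hγ : DistinguishedGamma Φ Δ ι γ) : γ ∈ Pos Φ Δ := by
  rcases hγ with ⟨_, rfl⟩ | ⟨n, hn, e, ⟨horth, hΦ, hΔ⟩, _, rfl⟩ |
    ⟨n, hn, e, ⟨horth, hΦ, hΔ⟩, _, rfl⟩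
  · exact simple_pos h hι
  · -- Type B
    have hoi := orthonormal_iff_ite.mp horth
    set v : V := ∑ i : Fin n, ((n : ℝ) - (i : ℕ)) • e i with hv
    have hve : ∀ j : Fin n, ⟪v, e j⟫ = (n : ℝ) - (j : ℕ) := by
      intro j
      rw [hv, sum_inner, Finset.sum_eq_single j]
      · rw [real_inner_smul_left, hoi j j]
        simp
      · intro i _ hij
        rw [real_inner_smul_left, hoi i j, if_neg hij, mul_zero]
      · intro habs; exact absurd (Finset.mem_univ j) habs
    have hγΦ : e ⟨n - 2, by omega⟩ + e ⟨n - 1, by omega⟩ ∈ Φ := by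
      have hset : e ⟨n - 2, by omega⟩ + e ⟨n - 1, by omega⟩ ∈ (Φ : Set V) := by
        rw [hΦ]
        left
        refine ⟨⟨n - 2, by omega⟩, ⟨n - 1, by omega⟩, ?_, Or.inr (Or.inl rfl)⟩
        simp only [ne_eq, Fin.mk.injEq]
        omega
      exact_mod_cast hset
    have hvΔ : ∀ α ∈ Δ, 0 ≤ ⟪v, α⟫ := by
      intro α hα
      have hset : α ∈ (Δ : Set V) := Finset.mem_coe.mpr hα
      rw [hΔ] at hset
      rcases hset with ⟨i, h', rfl⟩ | ⟨h', rfl⟩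
      · rw [inner_sub_right, hve, hve]
        have hval : ((⟨(i : ℕ) + 1, h'⟩ : Fin n) : ℕ) = (i : ℕ) + 1 := rfl
        rw [hval]
        push_cast
        linarith
      · rw [hve]
        have : ((n - 1 : ℕ) : ℝ) ≤ (n : ℝ) := Nat.cast_le.mpr (by omega)
        have hval : ((⟨n - 1, by omega⟩ : Fin n) : ℕ) = n - 1 := rfl
        rw [hval]
        linarith
    have hvγ : 0 < ⟪v, e ⟨n - 2, by omega⟩ + e ⟨n - 1, by omega⟩⟫ := by
      rw [inner_add_right, hve, hve]
      have h1 : ((n - 2 : ℕ) : ℝ) < (n : ℝ) := by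
        exact_mod_cast Nat.sub_lt (by omega) (by omega)
      have h2 : ((n - 1 : ℕ) : ℝ) < (n : ℝ) := by
        exact_mod_cast Nat.sub_lt (by omega) (by omega)
      have hval1 : ((⟨n - 2, by omega⟩ : Fin n) : ℕ) = n - 2 := rfl
      have hval2 : ((⟨n - 1, by omega⟩ : Fin n) : ℕ) = n - 1 := rfl
      rw [hval1, hval2]
      linarith
    exact pos_of_dominant h hγΦ hvΔ hvγ
  · -- Type C
    have hoi := orthonormal_iff_ite.mp horth
    set v : V := ∑ i : Fin n, ((n : ℝ) - (i : ℕ)) • e i with hv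
    have hve : ∀ j : Fin n, ⟪v, e j⟫ = (n : ℝ) - (j : ℕ) := by
      intro j
      rw [hv, sum_inner, Finset.sum_eq_single j]
      · rw [real_inner_smul_left, hoi j j]
        simp
      · intro i _ hij
        rw [real_inner_smul_left, hoi i j, if_neg hij, mul_zero]
      · intro habs; exact absurd (Finset.mem_univ j) habs
    have hγΦ : (2 : ℝ) • e ⟨0, by omega⟩ ∈ Φ := by
      have hset : (2 : ℝ) • e ⟨0, by omega⟩ ∈ (Φ : Set V) := by
        rw [hΦ]
        right
        exact ⟨⟨0, by omega⟩, Or.inl rfl⟩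
      exact_mod_cast hset
    have hvΔ : ∀ α ∈ Δ, 0 ≤ ⟪v, α⟫ := by
      intro α hα
      have hset : α ∈ (Δ : Set V) := Finset.mem_coe.mpr hα
      rw [hΔ] at hset
      rcases hset with ⟨i, h', rfl⟩ | ⟨h', rfl⟩
      · rw [inner_sub_right, hve, hve]
        have hval : ((⟨(i : ℕ) + 1, h'⟩ : Fin n) : ℕ) = (i : ℕ) + 1 := rfl
        rw [hval]
        push_cast
        linarith
      · rw [real_inner_smul_right, hve]
        have : ((n - 1 : ℕ) : ℝ) ≤ (n : ℝ) := Nat.cast_le.mpr (by omega)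
        have hval : ((⟨n - 1, by omega⟩ : Fin n) : ℕ) = n - 1 := rfl
        rw [hval]
        linarith
    have hvγ : 0 < ⟪v, (2 : ℝ) • e ⟨0, by omega⟩⟫ := by
      rw [real_inner_smul_right, hve]
      have hval : ((⟨0, by omega⟩ : Fin n) : ℕ) = 0 := rfl
      rw [hval]
      have : (2 : ℝ) ≤ (n : ℝ) := by exact_mod_cast hn
      push_cast
      nlinarith
    exact pos_of_dominant h hγΦ hvΔ hvγ

end Aux
open Pp in
/-- Proposition 2.3(1): for `w ∈ W(γ) = {w ∈ W^P : wγ = -θ}` one has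
`ℓ(w s_γ) = ℓ(w) - ℓ(s_γ)` (stated additively). -/
theorem stmt6 {V : Type*} [NormedAddCommGroup V] [InnerProductSpace ℝ V]
    (Φ Δ : Finset V) (hRS : IsRS Φ Δ) (ι : V) (hι : ι ∈ Δ)
    (hmin : Minuscule Φ Δ ι)
    (γ : V) (hγ : DistinguishedGamma Φ Δ ι γ)
    (θ : V) (hθ : IsHighest Φ Δ θ)
    (w : V → V) (hw : MinRep Φ Δ (Δ.erase ι) w) (hwγ : w γ = -θ) :
    len Δ (w ∘ sref γ) + len Δ (sref γ) = len Δ w := by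
  obtain ⟨hwW, -⟩ := hw
  have hγP : γ ∈ Pos Φ Δ := Aux.gamma_pos hRS hι hγ
  have hsγW : sref γ ∈ Weyl Δ := Aux.sref_weyl_of_pos hRS hγP
  have hwsW : w ∘ sref γ ∈ Weyl Δ := Aux.weyl_comp hwW hsγW
  rw [Aux.len_eq_invc hRS _ w hwW rfl, Aux.len_eq_invc hRS _ _ hwsW rfl,
    Aux.len_eq_invc hRS _ _ hsγW rfl]
  exact Aux.invc_key hRS hθ hwW hwγ hγP
end
end
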